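/- With f as defined from the least modulus μ of a c.e. approximation {X_s} of ∅′ (f(x,y) = 0 iff y − x ≤ max{μ(z) : z ≤ x}), suppose H_L, H_R are infinite sets such that f(x,y) = 1 whenever x ∈ H_L, y ∈ H_R, x < y. Then for any z ∈ ω: taking the least x ∈ H_L with z ≤ x and the least y ∈ H_R with y > x, we have y − x > μ(z), and hence z ∈ ∅′ if and only if z ∈ X_{y−x}. Consequently ∅′ is computable from H_L ⊕ H_R. -/

import Mathlib

open Classical in
noncomputable def chr (A : Set ℕ) : ℕ →. ℕ :=
  fun n => Part.some (if n ∈ A then 1 else 0)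

/-- The effective join (recursive union) of two sets: `A ⊕ B`. -/
def setJoin (A B : Set ℕ) : Set ℕ :=
  {n | (n % 2 = 0 ∧ n / 2 ∈ A) ∨ (n % 2 = 1 ∧ n / 2 ∈ B)}

/-- Codes for partial recursive functions relative to an oracle. -/
inductive OCode : Type
  | zero | succ | left | right | oracle
  | pair (a b : OCode) | comp (a b : OCode)
  | prec (a b : OCode) | rfind' (a : OCode)

/-- Evaluation of an oracle code relative to oracle `O`. -/
def OCode.eval (O : ℕ →. ℕ) : OCode → ℕ →. ℕ
  | .zero => pure 0
  | .succ => Nat.succ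
  | .left => fun n : ℕ => n.unpair.1
  | .right => fun n : ℕ => n.unpair.2
  | .oracle => O
  | .pair cf cg => fun n => Nat.pair <$> eval O cf n <*> eval O cg n
  | .comp cf cg => fun n => eval O cg n >>= eval O cf
  | .prec cf cg =>
    Nat.unpaired fun a n =>
      n.rec (eval O cf a) fun y IH => do
        let i ← IH
        eval O cg (Nat.pair a (Nat.pair y i))
  | .rfind' cf =>
    Nat.unpaired fun a m =>
      (Nat.rfind fun n => (fun m => m = 0) <$> eval O cf (Nat.pair a (n + m))).map (· + m)

/-- `g` is partial recursive in the oracle `O`. -/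
def RecIn (O g : ℕ →. ℕ) : Prop := ∃ c : OCode, OCode.eval O c = g

def OCode.ofCode : Nat.Partrec.Code → OCode
  | .zero => .zero
  | .succ => .succ
  | .left => .left
  | .right => .right
  | .pair a b => .pair (ofCode a) (ofCode b)
  | .comp a b => .comp (ofCode a) (ofCode b)
  | .prec a b => .prec (ofCode a) (ofCode b)
  | .rfind' a => .rfind' (ofCode a)

theorem OCode.eval_ofCode (O : ℕ →. ℕ) : ∀ c : Nat.Partrec.Code,
    OCode.eval O (OCode.ofCode c) = c.eval := by
  intro c
  induction c with
  | zero => rfl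
  | succ => rfl
  | left => rfl
  | right => rfl
  | pair a b ha hb => simp [ofCode, eval, Nat.Partrec.Code.eval, ha, hb]; rfl
  | comp a b ha hb => simp [ofCode, eval, Nat.Partrec.Code.eval, ha, hb]; rfl
  | prec a b ha hb => simp [ofCode, eval, Nat.Partrec.Code.eval, ha, hb]; rfl
  | rfind' a ha => simp [ofCode, eval, Nat.Partrec.Code.eval, ha]; rfl

theorem RecIn.of_partrec {O f : ℕ →. ℕ} (h : Nat.Partrec f) : RecIn O f := by
  obtain ⟨c, hc⟩ := Nat.Partrec.Code.exists_code.1 h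
  exact ⟨.ofCode c, by rw [OCode.eval_ofCode, hc]⟩

theorem RecIn.oracle {O : ℕ →. ℕ} : RecIn O O := ⟨.oracle, rfl⟩

theorem RecIn.comp {O f g : ℕ →. ℕ} (hf : RecIn O f) (hg : RecIn O g) :
    RecIn O fun n => g n >>= f := by
  obtain ⟨cf, rfl⟩ := hf; obtain ⟨cg, rfl⟩ := hg
  exact ⟨.comp cf cg, rfl⟩

theorem RecIn.pair {O f g : ℕ →. ℕ} (hf : RecIn O f) (hg : RecIn O g) :
    RecIn O fun n => Nat.pair <$> f n <*> g n := by
  obtain ⟨cf, rfl⟩ := hf; obtain ⟨cg, rfl⟩ := hg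
  exact ⟨.pair cf cg, rfl⟩

theorem RecIn.of_eq {O f g : ℕ →. ℕ} (hf : RecIn O f) (h : ∀ n, f n = g n) : RecIn O g :=
  (funext h : f = g) ▸ hf

theorem RecIn.rfind {O f : ℕ →. ℕ} (hf : RecIn O f) :
    RecIn O fun a => Nat.rfind fun n => (fun m => m = 0) <$> f (Nat.pair a n) := by
  obtain ⟨cf, rfl⟩ := hf
  refine ⟨.comp (.rfind' cf) (.pair (.pair .left .right) .zero), ?_⟩
  funext n
  simp [OCode.eval, Seq.seq, pure, PFun.pure, Part.map_id']

theorem RecIn.comp_total {O g : ℕ →. ℕ} {f : ℕ → ℕ} (hg : RecIn O g) (hf : Computable f) :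
    RecIn O fun n => g (f n) :=
  (RecIn.comp hg (of_partrec (Partrec.nat_iff.1 hf))).of_eq fun n => by
    simp [PFun.coe_val, Part.bind_eq_bind, Part.bind_some]
    exact Part.bind_some (f n) g

theorem RecIn.total_comp {O : ℕ →. ℕ} {g : ℕ →. ℕ} {f : ℕ → ℕ} (hg : RecIn O g)
    (hf : Computable f) : RecIn O fun n => (g n).map f :=
  (RecIn.comp (of_partrec (Partrec.nat_iff.1 hf)) hg).of_eq fun n => by
    simp [PFun.coe_val, ← Part.bind_some_eq_map]
    rfl

/-- Turing reducibility between sets of naturals. -/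
def TuringLE (A B : Set ℕ) : Prop := RecIn (chr B) (chr A)

/-- The halting set `∅′`. -/
def K : Set ℕ := {n | ((Denumerable.ofNat Nat.Partrec.Code n).eval n).Dom}

/-- From any increasing p-homogeneous set with color `1` for the modulus coloring one can
decode `∅′`; consequently `∅′` is computable from `H_L ⊕ H_R`. -/
theorem modulus_coloring_decodes_halting
    (X : ℕ → ℕ → Bool) (hXcomp : Computable₂ X)
    (hmono : ∀ s n, X s n = true → X (s + 1) n = true)
    (hunion : ∀ n, n ∈ K ↔ ∃ s, X s n = true)
    (μ : ℕ → ℕ)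
    (hμ : ∀ z, (∀ w ≤ z, (X (μ z) w = true ↔ w ∈ K)) ∧
      ∀ s < μ z, ¬ (∀ w ≤ z, (X s w = true ↔ w ∈ K)))
    (f : ℕ → ℕ → Fin 2)
    (hf : ∀ x y, x < y →
      (f x y = 0 ↔ y - x ≤ (Finset.range (x + 1)).sup μ))
    (HL HR : Set ℕ) (hL : HL.Infinite) (hR : HR.Infinite)
    (hphom : ∀ x ∈ HL, ∀ y ∈ HR, x < y → f x y = 1) :
    (∀ z : ℕ,
      μ z < sInf {y ∈ HR | sInf {x ∈ HL | z ≤ x} < y} - sInf {x ∈ HL | z ≤ x} ∧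
      (z ∈ K ↔
        X (sInf {y ∈ HR | sInf {x ∈ HL | z ≤ x} < y} - sInf {x ∈ HL | z ≤ x}) z = true)) ∧
    TuringLE K (setJoin HL HR) := by
  classical
  -- basic facts about the least elements
  have hxmem : ∀ z : ℕ, sInf {x ∈ HL | z ≤ x} ∈ HL ∧ z ≤ sInf {x ∈ HL | z ≤ x} := by
    intro z
    have hne : {x ∈ HL | z ≤ x}.Nonempty := by
      obtain ⟨x, hx, hzx⟩ := hL.exists_gt z
      exact ⟨x, hx, hzx.le⟩
    exact Nat.sInf_mem hne
  have hxmin : ∀ z m : ℕ, m ∈ HL → z ≤ m → sInf {x ∈ HL | z ≤ x} ≤ m :=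
    fun z m h1 h2 => Nat.sInf_le ⟨h1, h2⟩
  have hymem : ∀ v : ℕ, sInf {y ∈ HR | v < y} ∈ HR ∧ v < sInf {y ∈ HR | v < y} := by
    intro v
    have hne : {y ∈ HR | v < y}.Nonempty := by
      obtain ⟨y, hy, hvy⟩ := hR.exists_gt v
      exact ⟨y, hy, hvy⟩
    exact Nat.sInf_mem hne
  have hymin : ∀ v m : ℕ, m ∈ HR → v < m → sInf {y ∈ HR | v < y} ≤ m :=
    fun v m h1 h2 => Nat.sInf_le ⟨h1, h2⟩
  have hmono' : ∀ n s t : ℕ, s ≤ t → X s n = true → X t n = true := by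
    intro n s t h hs
    induction h with
    | refl => exact hs
    | step _ ih => exact hmono _ _ ih
  -- Part 1
  have part1 : ∀ z : ℕ,
      μ z < sInf {y ∈ HR | sInf {x ∈ HL | z ≤ x} < y} - sInf {x ∈ HL | z ≤ x} ∧
      (z ∈ K ↔
        X (sInf {y ∈ HR | sInf {x ∈ HL | z ≤ x} < y} - sInf {x ∈ HL | z ≤ x}) z = true) := by
    intro z
    obtain ⟨hxL, hzx⟩ := hxmem z
    obtain ⟨hyR, hxy⟩ := hymem (sInf {x ∈ HL | z ≤ x})
    set x0 := sInf {x ∈ HL | z ≤ x}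
    set y0 := sInf {y ∈ HR | x0 < y}
    have hf1 : f x0 y0 = 1 := hphom _ hxL _ hyR hxy
    have hnle : ¬ (y0 - x0 ≤ (Finset.range (x0 + 1)).sup μ) := by
      intro hle
      have h0 := (hf x0 y0 hxy).2 hle
      rw [hf1] at h0
      exact absurd h0 (by decide)
    have hμle : μ z ≤ (Finset.range (x0 + 1)).sup μ :=
      Finset.le_sup (Finset.mem_range.2 (Nat.lt_succ_of_le hzx))
    have h1 : μ z < y0 - x0 := lt_of_le_of_lt hμle (not_le.1 hnle)
    refine ⟨h1, ⟨fun hz => ?_, fun hX => (hunion z).2 ⟨_, hX⟩⟩⟩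
    exact hmono' z (μ z) _ h1.le (((hμ z).1 z le_rfl).2 hz)
  refine ⟨part1, ?_⟩
  -- Part 2 : Turing reducibility
  show RecIn (chr (setJoin HL HR)) (chr K)
  set O : ℕ →. ℕ := chr (setJoin HL HR) with hO
  have hchr : ∀ n : ℕ, O n = Part.some (if n ∈ setJoin HL HR then 1 else 0) := by
    intro n
    simp [hO, chr]
  have hjL : ∀ k : ℕ, (2 * k ∈ setJoin HL HR) ↔ k ∈ HL := by
    intro k
    simp only [setJoin, Set.mem_setOf_eq,
      show 2 * k % 2 = 0 from by omega, show 2 * k / 2 = k from by omega]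
    simp
  have hjR : ∀ k : ℕ, (2 * k + 1 ∈ setJoin HL HR) ↔ k ∈ HR := by
    intro k
    simp only [setJoin, Set.mem_setOf_eq,
      show (2 * k + 1) % 2 = 1 from by omega, show (2 * k + 1) / 2 = k from by omega]
    simp
  -- computable ingredients
  have pu1 : Primrec fun n : ℕ => n.unpair.1 := Primrec.fst.comp Primrec.unpair
  have pu2 : Primrec fun n : ℕ => n.unpair.2 := Primrec.snd.comp Primrec.unpair
  have hc1 : Computable fun n : ℕ => 2 * (n.unpair.1 + n.unpair.2) :=
    (Primrec.nat_mul.comp (Primrec.const 2) (Primrec.nat_add.comp pu1 pu2)).to_comp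
  have pu11 : Primrec fun n : ℕ => n.unpair.1.unpair.1 :=
    (Primrec.fst.comp Primrec.unpair).comp pu1
  have pu12 : Primrec fun n : ℕ => n.unpair.1.unpair.2 :=
    (Primrec.snd.comp Primrec.unpair).comp pu1
  have hc2 : Computable fun n : ℕ =>
      2 * (n.unpair.1.unpair.1 + n.unpair.1.unpair.2 + 1 + n.unpair.2) + 1 :=
    (Primrec.nat_add.comp
      (Primrec.nat_mul.comp (Primrec.const 2)
        (Primrec.nat_add.comp
          (Primrec.nat_add.comp (Primrec.nat_add.comp pu11 pu12) (Primrec.const 1)) pu2))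
      (Primrec.const 1)).to_comp
  have hsub : Computable fun v : ℕ => 1 - v :=
    (Primrec.nat_sub.comp (Primrec.const 1) Primrec.id).to_comp
  -- the searches
  have s1 : RecIn O fun n : ℕ => (O (2 * (n.unpair.1 + n.unpair.2))).map fun v => 1 - v :=
    (RecIn.oracle.comp_total hc1).total_comp hsub
  have s2 : RecIn O fun n : ℕ =>
      (O (2 * (n.unpair.1.unpair.1 + n.unpair.1.unpair.2 + 1 + n.unpair.2) + 1)).map
        fun v => 1 - v :=
    (RecIn.oracle.comp_total hc2).total_comp hsub
  have r1 := s1.rfind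
  have r2 := s2.rfind
  have hid : RecIn O fun n : ℕ => Part.some n :=
    (RecIn.of_partrec (Nat.Partrec.of_primrec Nat.Primrec.id)).of_eq fun n => by
      simp [PFun.coe_val]
  have q1 := RecIn.pair hid r1
  have q2 := RecIn.pair hid r2
  have G := RecIn.comp q2 q1
  have ht : Computable fun m : ℕ =>
      (if X (m.unpair.2 + 1) (m.unpair.1.unpair.1) = true then (1:ℕ) else 0) := by
    have hXc : Computable fun m : ℕ => X (m.unpair.2 + 1) (m.unpair.1.unpair.1) :=
      hXcomp.comp (Primrec.succ.comp pu2).to_comp pu11.to_comp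
    exact (Computable.cond hXc (Computable.const 1) (Computable.const 0)).of_eq fun m => by
      cases h : X (m.unpair.2 + 1) (m.unpair.1.unpair.1) <;> simp [h]
  have final := G.total_comp ht
  -- values of the searches
  have hr1 : ∀ a : ℕ,
      (Nat.rfind fun n => (fun m => m = 0) <$>
        ((O (2 * ((Nat.pair a n).unpair.1 + (Nat.pair a n).unpair.2))).map fun v => 1 - v)) =
      Part.some (sInf {x ∈ HL | a ≤ x} - a) := by
    intro a
    obtain ⟨hxL, hax⟩ := hxmem a
    apply Part.eq_some_iff.2
    apply Nat.mem_rfind.2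
    constructor
    · have : a + (sInf {x ∈ HL | a ≤ x} - a) = sInf {x ∈ HL | a ≤ x} := by omega
      simp [hchr, Nat.unpair_pair, this, (hjL _).2 hxL]
    · intro m hm
      have hnm : a + m ∉ HL := by
        intro hmem
        have := hxmin a (a + m) hmem (Nat.le_add_right a m)
        omega
      have : ¬ (2 * (a + m) ∈ setJoin HL HR) := fun h => hnm ((hjL _).1 h)
      simp [hchr, Nat.unpair_pair, this]
  have hr2 : ∀ a : ℕ,
      (Nat.rfind fun n => (fun m => m = 0) <$>
        ((O (2 * ((Nat.pair a n).unpair.1.unpair.1 + (Nat.pair a n).unpair.1.unpair.2 + 1 +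
          (Nat.pair a n).unpair.2) + 1)).map fun v => 1 - v)) =
      Part.some (sInf {y ∈ HR | (a.unpair.1 + a.unpair.2) < y} -
        (a.unpair.1 + a.unpair.2 + 1)) := by
    intro a
    set v := a.unpair.1 + a.unpair.2 with hv
    obtain ⟨hyR, hvy⟩ := hymem v
    apply Part.eq_some_iff.2
    apply Nat.mem_rfind.2
    constructor
    · have : v + 1 + (sInf {y ∈ HR | v < y} - (v + 1)) = sInf {y ∈ HR | v < y} := by omega
      simp [hchr, Nat.unpair_pair, ← hv, this, (hjR _).2 hyR]
    · intro m hm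
      have hnm : v + 1 + m ∉ HR := by
        intro hmem
        have := hymin v (v + 1 + m) hmem (by omega)
        omega
      have : ¬ (2 * (v + 1 + m) + 1 ∈ setJoin HL HR) := fun h => hnm ((hjR _).1 h)
      simp [hchr, Nat.unpair_pair, ← hv, this]
  -- final equality
  apply final.of_eq
  intro z
  obtain ⟨hxL, hzx⟩ := hxmem z
  obtain ⟨hyR, hxy⟩ := hymem (sInf {x ∈ HL | z ≤ x})
  set x0 := sInf {x ∈ HL | z ≤ x} with hx0
  set y0 := sInf {y ∈ HR | x0 < y} with hy0
  have e1 : z + (x0 - z) = x0 := by omega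
  simp only [Part.bind_eq_bind, Part.map_eq_map, Seq.seq, Part.map_some, Part.bind_some]
    at hr1 hr2 ⊢
  rw [hr1 z]
  simp only [Part.map_some, Part.bind_some]
  rw [hr2]
  simp only [Nat.unpair_pair, e1, Part.map_some]
  have e2 : y0 - (x0 + 1) + 1 = y0 - x0 := by omega
  rw [← hx0, e1, ← hy0, e2]
  have hiff := (part1 z).2
  rw [← hx0, ← hy0] at hiff
  simp only [chr]
  by_cases hz : z ∈ K
  · simp [hz, hiff.1 hz]
  · have hnX : ¬ X (y0 - x0) z = true := fun h => hz (hiff.2 h)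
    simp [hz, hnX]
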